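/- arXiv:1603.08097 — 6 statements merged into one kernel-verified Lean document; each statement's English description precedes it below -/
import Mathlib

section
/- Theorem 1. Let λ be a real number and let j, k, p be natural numbers with j ≥ 1 and 4jp + 2k ≥ 2j + 1. Then the series ∑_{r=p}^∞ arctan( λ·F_{2j}·L_{4jr+2k} / (F_{4jr+2k}² − F_{2j}² + λ²) ) converges and its sum equals arctan( λ / F_{4jp+2k−2j} ). -/
open Nat Real

def lucas : ℕ → ℕ
  | 0 => 2
  | 1 => 1
  | n + 2 => lucas (n + 1) + lucas n

lemma lucas_int : ∀ n : ℕ, (lucas n : ℤ) = 2 * fib (n + 1) - fib n := by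
  intro n
  induction n using Nat.twoStepInduction with
  | zero => simp [lucas]
  | one => simp [lucas]
  | more n ih1 ih2 =>
    have h1 : (fib (n + 3) : ℤ) = fib (n + 1) + fib (n + 2) := by
      exact_mod_cast (Nat.fib_add_two (n := n + 1))
    have h2 : (fib (n + 2) : ℤ) = fib n + fib (n + 1) := by
      exact_mod_cast (Nat.fib_add_two (n := n))
    have h3 : (lucas (n + 2) : ℤ) = lucas (n + 1) + lucas n := by
      push_cast [lucas]; ring
    rw [h3, ih1, ih2, show n + 1 + 1 = n + 2 by ring, show n + 2 + 1 = n + 3 by ring]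
    linarith [h1, h2]

lemma fib_cassini (n : ℕ) : ((fib (n + 1) : ℤ)) ^ 2 - fib n * fib (n + 2) = (-1) ^ n := by
  induction n with
  | zero => simp
  | succ n ih =>
    have h1 : (fib (n + 2) : ℤ) = fib n + fib (n + 1) := by
      exact_mod_cast (Nat.fib_add_two (n := n))
    have h2 : (fib (n + 3) : ℤ) = fib (n + 1) + fib (n + 2) := by
      exact_mod_cast (Nat.fib_add_two (n := n + 1))
    have : ((-1 : ℤ)) ^ (n + 1) = -(-1) ^ n := by ring
    rw [this]
    linear_combination (-1 : ℤ) * ih + (fib (n + 2) : ℤ) * h1 - (fib (n + 1) : ℤ) * h2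

lemma fib_shift (s d : ℕ) :
    (fib (s + d) : ℤ) = (fib (s + 1) - fib s) * fib d + fib s * fib (d + 1) := by
  have h1 : (fib (s + d + 1) : ℤ) = fib s * fib d + fib (s + 1) * fib (d + 1) := by
    exact_mod_cast Nat.fib_add s d
  have h2 : (fib (s + d + 2) : ℤ) = fib (s + 1) * fib d + fib (s + 2) * fib (d + 1) := by
    have := Nat.fib_add (s + 1) d
    rw [show s + 1 + d + 1 = s + d + 2 by ring] at this
    exact_mod_cast this
  have h3 : (fib (s + d + 2) : ℤ) = fib (s + d) + fib (s + d + 1) := by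
    exact_mod_cast (Nat.fib_add_two (n := s + d))
  have h0 : (fib (s + 2) : ℤ) = fib s + fib (s + 1) := by
    exact_mod_cast (Nat.fib_add_two (n := s))
  linear_combination h2 - h3 - h1 + (fib (d + 1) : ℤ) * h0

lemma fib_cassini_even {n : ℕ} (hn : Even n) :
    ((fib (n + 1) : ℤ)) ^ 2 - fib n * fib (n + 2) = 1 := by
  rw [fib_cassini n, hn.neg_one_pow]

lemma identA {m d : ℕ} (hd : Even d) :
    (fib (m + d + d) : ℤ) = fib m + fib d * lucas (m + d) := by
  have hX := fib_shift m d
  have hY : (fib (m + d + 1) : ℤ) = fib m * fib d + fib (m + 1) * fib (d + 1) := by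
    exact_mod_cast Nat.fib_add m d
  have hZ := fib_shift (m + d) d
  have hL := lucas_int (m + d)
  have hcd := fib_cassini_even hd
  have hd2 : (fib (d + 2) : ℤ) = fib d + fib (d + 1) := by
    exact_mod_cast (Nat.fib_add_two (n := d))
  rw [hZ, hL, hX, hY]
  linear_combination (fib m : ℤ) * hcd + ((fib m : ℤ) * fib d) * hd2

lemma identB {m d : ℕ} (hm : Even m) :
    (fib m : ℤ) * fib (m + d + d) = fib (m + d) ^ 2 - fib d ^ 2 := by
  have hX := fib_shift m d
  have hY : (fib (m + d + 1) : ℤ) = fib m * fib d + fib (m + 1) * fib (d + 1) := by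
    exact_mod_cast Nat.fib_add m d
  have hZ := fib_shift (m + d) d
  have hcm := fib_cassini_even hm
  have hm2 : (fib (m + 2) : ℤ) = fib m + fib (m + 1) := by
    exact_mod_cast (Nat.fib_add_two (n := m))
  rw [hZ, hX, hY]
  linear_combination (-(fib d : ℤ) ^ 2) * hcm + (-(fib d : ℤ) ^ 2 * fib m) * hm2

lemma term_eq (lam : ℝ) {j m : ℕ} (hj : 1 ≤ j) (hm : 1 ≤ m) (hme : Even m) :
    Real.arctan (lam * (fib (2 * j) : ℝ) * (lucas (m + 2 * j) : ℝ) /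
      ((fib (m + 2 * j) : ℝ) ^ 2 - (fib (2 * j) : ℝ) ^ 2 + lam ^ 2)) =
    Real.arctan (lam / (fib m : ℝ)) - Real.arctan (lam / (fib (m + 4 * j) : ℝ)) := by
  have hF1 : (0 : ℝ) < fib m := by exact_mod_cast Nat.fib_pos.mpr hm
  have hF2 : (0 : ℝ) < fib (m + 4 * j) := by exact_mod_cast Nat.fib_pos.mpr (by omega)
  have hA : (fib (m + 4 * j) : ℝ) - fib m = fib (2 * j) * lucas (m + 2 * j) := by
    have hz := identA (m := m) (d := 2 * j) ⟨j, by ring⟩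
    rw [show m + 2 * j + 2 * j = m + 4 * j by ring] at hz
    have hr : (fib (m + 4 * j) : ℝ) = fib m + fib (2 * j) * lucas (m + 2 * j) := by
      exact_mod_cast hz
    rw [hr]; ring
  have hB : (fib m : ℝ) * fib (m + 4 * j)
      = (fib (m + 2 * j) : ℝ) ^ 2 - (fib (2 * j) : ℝ) ^ 2 := by
    have hz := identB (m := m) (d := 2 * j) hme
    rw [show m + 2 * j + 2 * j = m + 4 * j by ring] at hz
    exact_mod_cast hz
  have hden : (0 : ℝ) < (fib (m + 2 * j) : ℝ) ^ 2 - (fib (2 * j) : ℝ) ^ 2 + lam ^ 2 := by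
    rw [← hB]; positivity
  have hxy : lam / (fib m : ℝ) * (lam / (fib (m + 4 * j) : ℝ))
      = lam ^ 2 / ((fib m : ℝ) * fib (m + 4 * j)) := by
    field_simp
  have h2pos : (0 : ℝ) < 1 - lam / (fib m : ℝ) * -(lam / (fib (m + 4 * j) : ℝ)) := by
    rw [mul_neg, sub_neg_eq_add, hxy]
    positivity
  have hprod : lam / (fib m : ℝ) * -(lam / (fib (m + 4 * j) : ℝ)) < 1 := by linarith
  have key := Real.arctan_add hprod
  rw [Real.arctan_neg, ← sub_eq_add_neg] at key
  rw [key]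
  congr 1
  rw [div_eq_div_iff (ne_of_gt hden) (ne_of_gt h2pos)]
  field_simp
  linear_combination (-lam * ((fib (m + 2 * j) : ℝ) ^ 2 - (fib (2 * j) : ℝ) ^ 2 + lam ^ 2)) * hA +
    lam * (fib (2 * j) : ℝ) * (lucas (m + 2 * j) : ℝ) * hB

lemma aux (lam : ℝ) (j k p : ℕ) (hj : 1 ≤ j)
    (h : 2 * j + 1 ≤ 4 * j * p + 2 * k) (hlam : 0 ≤ lam) :
    HasSum (fun r : ℕ =>
        Real.arctan (lam * (Nat.fib (2 * j) : ℝ) * (lucas (4 * j * (p + r) + 2 * k) : ℝ) /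
          ((Nat.fib (4 * j * (p + r) + 2 * k) : ℝ) ^ 2 - (Nat.fib (2 * j) : ℝ) ^ 2 + lam ^ 2)))
      (Real.arctan (lam / (Nat.fib (4 * j * p + 2 * k - 2 * j) : ℝ))) := by
  set mm : ℕ → ℕ := fun r => 4 * j * (p + r) + 2 * k - 2 * j with hmm
  set g : ℕ → ℝ := fun r => Real.arctan (lam / (fib (mm r) : ℝ)) with hg
  -- basic arithmetic facts
  have hge : ∀ r : ℕ, 2 * j + 1 ≤ 4 * j * (p + r) + 2 * k := by
    intro r
    refine le_trans h (Nat.add_le_add_right ?_ _)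
    exact Nat.mul_le_mul_left _ (Nat.le_add_right p r)
  have hmm1 : ∀ r, 1 ≤ mm r := by
    intro r; have := hge r; simp only [hmm]; omega
  have hmmstep : ∀ r, mm (r + 1) = mm r + 4 * j := by
    intro r
    have h1 : 4 * j * (p + (r + 1)) + 2 * k = 4 * j * (p + r) + 2 * k + 4 * j := by ring
    have := hge r
    simp only [hmm, h1]; omega
  have hmmeven : ∀ r, Even (mm r) := by
    intro r
    have h2 : 4 * j * (p + r) + 2 * k = 2 * (2 * j * (p + r) + k) := by ring
    have := hge r
    simp only [hmm, h2]
    have : Even (2 * (2 * j * (p + r) + k) - 2 * j) := by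
      refine (Nat.even_sub (by omega)).mpr ?_
      simp [even_two_mul, Even.mul_right, Nat.even_mul]
    exact this
  have hmmge : ∀ r, 4 * r + 1 ≤ mm r := by
    intro r
    have h4 : 4 * r ≤ 4 * j * r := by
      have : 4 ≤ 4 * j := by omega
      exact Nat.mul_le_mul_right r this
    have hexp : 4 * j * (p + r) = 4 * j * p + 4 * j * r := by ring
    simp only [hmm, hexp]
    omega
  -- the summand telescopes
  have hfun : (fun r : ℕ =>
        Real.arctan (lam * (Nat.fib (2 * j) : ℝ) * (lucas (4 * j * (p + r) + 2 * k) : ℝ) /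
          ((Nat.fib (4 * j * (p + r) + 2 * k) : ℝ) ^ 2 - (Nat.fib (2 * j) : ℝ) ^ 2 + lam ^ 2)))
      = fun r => g r - g (r + 1) := by
    funext r
    have hle2 : 2 * j ≤ 4 * j * (p + r) + 2 * k := by have := hge r; omega
    have hmr : mm r + 2 * j = 4 * j * (p + r) + 2 * k := by
      simp only [hmm]; omega
    have e := term_eq lam (j := j) (m := mm r) hj (hmm1 r) (hmmeven r)
    rw [hmr, ← hmmstep r] at e
    simp only [hg]
    exact e
  rw [hfun]
  -- monotonicity and limits
  have hfibpos : ∀ r, (0 : ℝ) < fib (mm r) := by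
    intro r; exact_mod_cast Nat.fib_pos.mpr (hmm1 r)
  have hganti : ∀ r, g (r + 1) ≤ g r := by
    intro r
    apply Real.arctan_strictMono.monotone
    have hle : (fib (mm r) : ℝ) ≤ fib (mm (r + 1)) := by
      exact_mod_cast Nat.fib_mono (by rw [hmmstep r]; omega)
    gcongr
    · exact hfibpos r
  have hnonneg : ∀ r, 0 ≤ g r - g (r + 1) := fun r => sub_nonneg.mpr (hganti r)
  have htend : Filter.Tendsto g Filter.atTop (nhds 0) := by
    have h1 : Filter.Tendsto (fun r : ℕ => (fib (mm r) : ℝ)) Filter.atTop Filter.atTop := by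
      apply tendsto_natCast_atTop_atTop.comp
      have hb : ∀ r, mm r - 2 ≤ fib (mm r) := by
        intro r
        rcases Nat.lt_or_ge (mm r) 2 with hc | hc
        · omega
        · have : mm r - 2 ≤ fib ((mm r - 2) + 2) :=
            Nat.fib_add_two_strictMono.le_apply
          rw [show mm r - 2 + 2 = mm r by omega] at this
          omega
      apply Filter.tendsto_atTop_mono (fun r => ?_) Filter.tendsto_id
      have h1 := hmmge r
      have h2 := hb r
      show r ≤ fib (mm r)
      omega
    have h2 : Filter.Tendsto (fun r : ℕ => lam / (fib (mm r) : ℝ)) Filter.atTop (nhds 0) :=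
      Filter.Tendsto.div_atTop tendsto_const_nhds h1
    have := (Real.continuous_arctan.tendsto 0).comp h2
    rw [Real.arctan_zero] at this
    exact this
  -- conclude
  have hpartial : Filter.Tendsto (fun n => ∑ i ∈ Finset.range n, (g i - g (i + 1)))
      Filter.atTop (nhds (g 0)) := by
    simp only [Finset.sum_range_sub' g]
    simpa using Filter.Tendsto.const_sub (g 0) htend
  have hval : Real.arctan (lam / (Nat.fib (4 * j * p + 2 * k - 2 * j) : ℝ)) = g 0 := by
    simp only [hg, hmm]
    norm_num
  rw [hval]
  exact (hasSum_iff_tendsto_nat_of_nonneg hnonneg _).mpr hpartial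

theorem theorem1 (lam : ℝ) (j k p : ℕ) (hj : 1 ≤ j)
    (h : 2 * j + 1 ≤ 4 * j * p + 2 * k) :
    HasSum (fun r : ℕ =>
        Real.arctan (lam * (Nat.fib (2 * j) : ℝ) * (lucas (4 * j * (p + r) + 2 * k) : ℝ) /
          ((Nat.fib (4 * j * (p + r) + 2 * k) : ℝ) ^ 2 - (Nat.fib (2 * j) : ℝ) ^ 2 + lam ^ 2)))
      (Real.arctan (lam / (Nat.fib (4 * j * p + 2 * k - 2 * j) : ℝ))) := by
  rcases le_or_gt 0 lam with hlam | hlam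
  · exact aux lam j k p hj h hlam
  · have H := (aux (-lam) j k p hj h (by linarith)).neg
    have h1 : (fun r : ℕ =>
        -(Real.arctan (-lam * (Nat.fib (2 * j) : ℝ) * (lucas (4 * j * (p + r) + 2 * k) : ℝ) /
          ((Nat.fib (4 * j * (p + r) + 2 * k) : ℝ) ^ 2 - (Nat.fib (2 * j) : ℝ) ^ 2 + (-lam) ^ 2))))
        = (fun r : ℕ =>
        Real.arctan (lam * (Nat.fib (2 * j) : ℝ) * (lucas (4 * j * (p + r) + 2 * k) : ℝ) /
          ((Nat.fib (4 * j * (p + r) + 2 * k) : ℝ) ^ 2 - (Nat.fib (2 * j) : ℝ) ^ 2 + lam ^ 2))) := by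
      funext r
      rw [← Real.arctan_neg]
      ring_nf
    have h2 : -(Real.arctan (-lam / (Nat.fib (4 * j * p + 2 * k - 2 * j) : ℝ)))
        = Real.arctan (lam / (Nat.fib (4 * j * p + 2 * k - 2 * j) : ℝ)) := by
      rw [← Real.arctan_neg]
      ring_nf
    rw [h1, h2] at H
    exact H
end

section
/- Theorem 2. Let λ be a nonzero real number and let j, k, p be natural numbers with j ≥ 1 and (4j−2)p + 2k ≥ 2j + 1. Then the series ∑_{r=p}^∞ arctan( λ·L_{2j−1}·F_{(4j−2)r+2k−1} / (F_{(4j−2)r+2k−1}² − F_{2j−1}² + λ²) ) converges and its sum equals arctan( λ / F_{(4j−2)p+2k−2j} ). -/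
open Real Filter Nat

lemma lucas_eq_int (d : ℕ) : (lucas d : ℤ) = 2 * fib (d + 1) - fib d := by
  induction d using Nat.twoStepInduction with
  | zero => simp [lucas]
  | one => simp [lucas]
  | more n ih1 ih2 =>
    have h1 : fib (n + 3) = fib (n + 1) + fib (n + 2) := fib_add_two
    have h2 : fib (n + 2) = fib n + fib (n + 1) := fib_add_two
    simp only [lucas]
    push_cast [h1, h2] at *
    linarith

lemma cassini (n : ℕ) : (fib (n + 1) : ℤ) ^ 2 - fib (n + 1) * fib n - (fib n : ℤ) ^ 2 = (-1) ^ n := by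
  induction n with
  | zero => simp
  | succ n ih =>
    have h : fib (n + 2) = fib n + fib (n + 1) := fib_add_two
    push_cast [h, pow_succ]
    nlinarith [ih]

lemma fib_add_int (s d : ℕ) :
    (fib (s + d) : ℤ) = fib s * fib (d + 1) - fib s * fib d + fib (s + 1) * fib d := by
  cases d with
  | zero => simp
  | succ d =>
    have hadd := Nat.fib_add s d
    have h : fib (d + 2) = fib d + fib (d + 1) := fib_add_two
    have hsd : s + (d + 1) = s + d + 1 := by ring
    rw [hsd]
    push_cast [hadd, h]
    ring

lemma key1 (s d : ℕ) (hd : Odd d) :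
    (fib (s + 2 * d) : ℤ) = fib (s + d) * lucas d + fib s := by
  have h1 := fib_add_int s d
  have h2 := fib_add_int (s + d) d
  have h3 : s + d + d = s + 2 * d := by ring
  rw [h3] at h2
  have h4 : (fib (s + d + 1) : ℤ) = fib s * fib d + fib (s + 1) * fib (d + 1) := by
    have := Nat.fib_add s d
    push_cast [this]; ring
  have hcas := cassini d
  have hodd : ((-1 : ℤ)) ^ d = -1 := hd.neg_one_pow
  rw [hodd] at hcas
  rw [lucas_eq_int, h2, h4, h1]
  nlinarith [hcas]

lemma key2 (s d : ℕ) (hs : Even s) :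
    (fib s : ℤ) * fib (s + 2 * d) + (fib d : ℤ) ^ 2 = (fib (s + d) : ℤ) ^ 2 := by
  have h1 := fib_add_int s d
  have h2 := fib_add_int (s + d) d
  have h3 : s + d + d = s + 2 * d := by ring
  rw [h3] at h2
  have h4 : (fib (s + d + 1) : ℤ) = fib s * fib d + fib (s + 1) * fib (d + 1) := by
    have := Nat.fib_add s d
    push_cast [this]; ring
  have hcas := cassini s
  have heven : ((-1 : ℤ)) ^ s = 1 := hs.neg_one_pow
  rw [heven] at hcas
  rw [h2, h4, h1]
  nlinarith [hcas]

lemma step (lam : ℝ) (d s : ℕ) (hd : Odd d) (hs : Even s) (hs1 : 1 ≤ s) :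
    Real.arctan (lam / fib s) - Real.arctan (lam / fib (s + 2 * d)) =
      Real.arctan (lam * (lucas d : ℝ) * fib (s + d) /
        ((fib (s + d) : ℝ) ^ 2 - (fib d : ℝ) ^ 2 + lam ^ 2)) := by
  have hA : (0 : ℝ) < fib s := by
    exact_mod_cast Nat.fib_pos.2 (by omega)
  have hB : (0 : ℝ) < fib (s + 2 * d) := by
    exact_mod_cast Nat.fib_pos.2 (by omega)
  have hAB : (fib s : ℝ) * fib (s + 2 * d) = (fib (s + d) : ℝ) ^ 2 - (fib d : ℝ) ^ 2 := by
    have h := key2 s d hs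
    have h2 : (fib s : ℝ) * fib (s + 2 * d) + (fib d : ℝ) ^ 2 = (fib (s + d) : ℝ) ^ 2 := by
      exact_mod_cast congrArg (fun z : ℤ => (z : ℝ)) h
    linarith
  have hBA : (fib (s + 2 * d) : ℝ) - fib s = (lucas d : ℝ) * fib (s + d) := by
    have h := key1 s d hd
    have h2 : (fib (s + 2 * d) : ℝ) = fib (s + d) * lucas d + fib s := by
      exact_mod_cast congrArg (fun z : ℤ => (z : ℝ)) h
    linarith
  have hprod : (lam / fib s) * (-(lam / fib (s + 2 * d))) < 1 := by
    have h1 : (lam / fib s) * (-(lam / fib (s + 2 * d)))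
        = -(lam ^ 2 / ((fib s : ℝ) * fib (s + 2 * d))) := by ring
    rw [h1]
    have : 0 ≤ lam ^ 2 / ((fib s : ℝ) * fib (s + 2 * d)) := by positivity
    linarith
  have harctan := Real.arctan_add hprod
  rw [Real.arctan_neg] at harctan
  rw [sub_eq_add_neg, harctan]
  congr 1
  have hABpos : (0:ℝ) < (fib s : ℝ) * fib (s + 2 * d) := mul_pos hA hB
  have hden : (fib (s + d) : ℝ) ^ 2 - (fib d : ℝ) ^ 2 + lam ^ 2 ≠ 0 := by
    rw [← hAB]; positivity
  have hden2 : (1:ℝ) - lam / fib s * -(lam / fib (s + 2 * d)) ≠ 0 := by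
    nlinarith [hprod]
  have hden3 : (fib s : ℝ) * fib (s + 2 * d) + lam ^ 2 ≠ 0 := by positivity
  have h1 : (lam / fib s + -(lam / fib (s + 2 * d))) /
      (1 - lam / fib s * -(lam / fib (s + 2 * d)))
      = lam * ((fib (s + 2 * d) : ℝ) - fib s) / ((fib s : ℝ) * fib (s + 2 * d) + lam ^ 2) := by
    rw [div_eq_div_iff hden2 hden3]
    field_simp
    ring
  rw [h1, hBA, hAB]
  ring_nf

lemma telescope_antitone {a : ℕ → ℝ} {l : ℝ} (hmono : Antitone a)
    (hlim : Tendsto a atTop (nhds l)) :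
    HasSum (fun n => a n - a (n + 1)) (a 0 - l) := by
  have hnonneg : ∀ n, 0 ≤ a n - a (n + 1) := fun n => sub_nonneg.2 (hmono (Nat.le_succ n))
  have hge : ∀ n, l ≤ a n := fun n =>
    le_of_tendsto hlim (eventually_atTop.2 ⟨n, fun m hm => hmono hm⟩)
  have hsum : ∀ n, ∑ i ∈ Finset.range n, (a i - a (i + 1)) = a 0 - a n := by
    intro n; exact Finset.sum_range_sub' a n
  have hsummable : Summable (fun n => a n - a (n + 1)) := by
    apply summable_of_sum_range_le hnonneg (c := a 0 - l)
    intro n; rw [hsum]; linarith [hge n]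
  rw [hsummable.hasSum_iff_tendsto_nat]
  simp only [hsum]
  exact tendsto_const_nhds.sub hlim

lemma telescope_monotone {a : ℕ → ℝ} {l : ℝ} (hmono : Monotone a)
    (hlim : Tendsto a atTop (nhds l)) :
    HasSum (fun n => a n - a (n + 1)) (a 0 - l) := by
  have h := telescope_antitone (a := fun n => -a n) (l := -l)
    (fun m n hmn => neg_le_neg (hmono hmn)) (hlim.neg)
  have h2 := h.neg
  have hf : (fun n => -(-a n - -a (n + 1))) = fun n => a n - a (n + 1) := by
    funext n; ring
  have hv : -(-a 0 - -l) = a 0 - l := by ring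
  rw [hf, hv] at h2
  exact h2

lemma main_lemma (lam : ℝ) (d s : ℕ) (hd : Odd d) (hs : Even s) (hs1 : 1 ≤ s) :
    HasSum (fun r : ℕ =>
        Real.arctan (lam * (lucas d : ℝ) * fib (s + 2 * d * r + d) /
          ((fib (s + 2 * d * r + d) : ℝ) ^ 2 - (fib d : ℝ) ^ 2 + lam ^ 2)))
      (Real.arctan (lam / fib s)) := by
  set a : ℕ → ℝ := fun r => Real.arctan (lam / fib (s + 2 * d * r)) with ha
  have hd1 : 1 ≤ d := hd.pos
  have hfibpos : ∀ r, (0 : ℝ) < fib (s + 2 * d * r) := by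
    intro r; exact_mod_cast Nat.fib_pos.2 (by omega)
  have hfible : ∀ {m n : ℕ}, m ≤ n → (fib (s + 2 * d * m) : ℝ) ≤ fib (s + 2 * d * n) := by
    intro m n hmn; exact_mod_cast Nat.fib_mono (by nlinarith)
  have hlim : Tendsto a atTop (nhds 0) := by
    have hdiv : Tendsto (fun r : ℕ => lam / fib (s + 2 * d * r)) atTop (nhds 0) := by
      apply Tendsto.div_atTop (tendsto_const_nhds)
      apply tendsto_atTop_mono (fun r : ℕ => ?_) tendsto_natCast_atTop_atTop
      have hr : r ≤ fib (s + 2 * d * r) := by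
        have h1 := Nat.le_fib_add_one (r + 1)
        have h2 : fib (r + 1) ≤ fib (s + 2 * d * r) := by
          apply Nat.fib_mono
          have : r ≤ 2 * d * r := by nlinarith
          omega
        omega
      exact_mod_cast hr
    have hc := Real.continuous_arctan.tendsto 0
    rw [Real.arctan_zero] at hc
    exact hc.comp hdiv
  have hkey : HasSum (fun n => a n - a (n + 1)) (a 0 - 0) := by
    rcases le_or_gt 0 lam with hl | hl
    · refine telescope_antitone (fun m n hmn => ?_) hlim
      exact Real.arctan_strictMono.monotone
        (div_le_div_of_nonneg_left hl (hfibpos m) (hfible hmn))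
    · refine telescope_monotone (fun m n hmn => ?_) hlim
      apply Real.arctan_strictMono.monotone
      rw [div_le_div_iff₀ (hfibpos m) (hfibpos n)]
      nlinarith [hfible hmn, hfibpos m]
  have hterm : ∀ r : ℕ, a r - a (r + 1) =
      Real.arctan (lam * (lucas d : ℝ) * fib (s + 2 * d * r + d) /
        ((fib (s + 2 * d * r + d) : ℝ) ^ 2 - (fib d : ℝ) ^ 2 + lam ^ 2)) := by
    intro r
    have hse : Even (s + 2 * d * r) := by
      rcases hs with ⟨t, ht⟩; exact ⟨t + d * r, by rw [ht]; ring⟩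
    have hstep := step lam d (s + 2 * d * r) hd hse (by omega)
    have hidx : s + 2 * d * r + 2 * d = s + 2 * d * (r + 1) := by ring
    rw [hidx] at hstep
    exact hstep
  have ha0 : a 0 = Real.arctan (lam / fib s) := by simp [ha]
  simp only [hterm, sub_zero, ha0] at hkey
  exact hkey

theorem theorem2 (lam : ℝ) (hlam : lam ≠ 0) (j k p : ℕ) (hj : 1 ≤ j)
    (h : 2 * j + 1 ≤ (4 * j - 2) * p + 2 * k) :
    HasSum (fun r : ℕ =>
        Real.arctan (lam * (lucas (2 * j - 1) : ℝ) *
            (Nat.fib ((4 * j - 2) * (p + r) + 2 * k - 1) : ℝ) /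
          ((Nat.fib ((4 * j - 2) * (p + r) + 2 * k - 1) : ℝ) ^ 2
            - (Nat.fib (2 * j - 1) : ℝ) ^ 2 + lam ^ 2)))
      (Real.arctan (lam / (Nat.fib ((4 * j - 2) * p + 2 * k - 2 * j) : ℝ))) := by
  have hd : Odd (2 * j - 1) := by rw [Nat.odd_iff]; omega
  have hs : Even ((4 * j - 2) * p + 2 * k - 2 * j) := by
    rw [Nat.even_iff]
    have h4 : (4 * j - 2) % 2 = 0 := by omega
    have h5 : (4 * j - 2) * p % 2 = 0 := by
      have := Nat.mul_mod (4 * j - 2) p 2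
      simp [h4] at this
      omega
    omega
  have hs1 : 1 ≤ (4 * j - 2) * p + 2 * k - 2 * j := by omega
  have hmain := main_lemma lam (2 * j - 1) ((4 * j - 2) * p + 2 * k - 2 * j) hd hs hs1
  have hidx : ∀ r : ℕ, ((4 * j - 2) * p + 2 * k - 2 * j) + 2 * (2 * j - 1) * r + (2 * j - 1)
      = (4 * j - 2) * (p + r) + 2 * k - 1 := by
    intro r
    have hm : (4 * j - 2) * (p + r) = (4 * j - 2) * p + (4 * j - 2) * r := by ring
    have hm2 : 2 * (2 * j - 1) * r = (4 * j - 2) * r := by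
      have h22 : 2 * (2 * j - 1) = 4 * j - 2 := by omega
      rw [h22]
    omega
  have hfun : (fun r : ℕ =>
      Real.arctan (lam * (lucas (2 * j - 1) : ℝ) *
          (Nat.fib ((4 * j - 2) * (p + r) + 2 * k - 1) : ℝ) /
        ((Nat.fib ((4 * j - 2) * (p + r) + 2 * k - 1) : ℝ) ^ 2
          - (Nat.fib (2 * j - 1) : ℝ) ^ 2 + lam ^ 2)))
      = (fun r : ℕ =>
      Real.arctan (lam * (lucas (2 * j - 1) : ℝ) *
          (Nat.fib (((4 * j - 2) * p + 2 * k - 2 * j) + 2 * (2 * j - 1) * r + (2 * j - 1)) : ℝ) /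
        ((Nat.fib (((4 * j - 2) * p + 2 * k - 2 * j) + 2 * (2 * j - 1) * r + (2 * j - 1)) : ℝ) ^ 2
          - (Nat.fib (2 * j - 1) : ℝ) ^ 2 + lam ^ 2))) := by
    funext r; rw [hidx r]
  rw [hfun]
  exact hmain
end

section
/- Theorem 3. Let λ be a real number and let j, k, p be natural numbers with j ≥ 1 and 4jp + 2k ≥ 2j + 1. Then the series ∑_{r=p}^∞ arctan( 5λ·F_{2j}·F_{4jr+2k−1} / (L_{8jr+4k−2} − L_{4j} + λ²) ) converges and its sum equals arctan( λ / L_{4jp+2k−2j−1} ). -/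
open Real Filter

theorem lucas_binet : ∀ n : ℕ, (lucas n : ℝ) = goldenRatio ^ n + goldenConj ^ n
  | 0 => by norm_num [lucas]
  | 1 => by
    rw [pow_one, pow_one, goldenRatio_add_goldenConj]; norm_num [lucas]
  | n + 2 => by
    have h1 := lucas_binet n
    have h2 := lucas_binet (n + 1)
    have hg : goldenRatio ^ 2 = goldenRatio + 1 := goldenRatio_sq
    have hc : goldenConj ^ 2 = goldenConj + 1 := goldenConj_sq
    push_cast [lucas]
    rw [h1, h2]
    obtain ⟨A, hA⟩ : ∃ x, goldenRatio = x := ⟨_, rfl⟩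
    obtain ⟨B, hB⟩ : ∃ x, goldenConj = x := ⟨_, rfl⟩
    simp only [hA, hB] at hg hc ⊢
    linear_combination (-(A ^ n)) * hg + (-(B ^ n)) * hc

theorem lucas_pos : ∀ n : ℕ, 0 < lucas n
  | 0 => by norm_num [lucas]
  | 1 => by norm_num [lucas]
  | n + 2 => by
    have h1 := lucas_pos n
    have h2 := lucas_pos (n + 1)
    simp only [lucas]; omega

theorem self_le_lucas : ∀ n : ℕ, n ≤ lucas n
  | 0 => by norm_num [lucas]
  | 1 => by norm_num [lucas]
  | n + 2 => by
    have h1 := lucas_pos n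
    have h2 := self_le_lucas (n + 1)
    simp only [lucas]; omega

theorem key1_s3 (s t : ℕ) :
    (lucas (s + 4 * t) : ℝ) = lucas s + 5 * Nat.fib (2 * t) * Nat.fib (s + 2 * t) := by
  have h5 : Real.sqrt 5 * Real.sqrt 5 = 5 := Real.mul_self_sqrt (by norm_num)
  have h50 : Real.sqrt 5 ≠ 0 := by positivity
  rw [lucas_binet, lucas_binet, Real.coe_fib_eq, Real.coe_fib_eq]
  have e1 : goldenRatio ^ (s + 4 * t) = goldenRatio ^ s * (goldenRatio ^ t) ^ 4 := by
    rw [← pow_mul, ← pow_add, Nat.mul_comm t 4]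
  have e2 : goldenConj ^ (s + 4 * t) = goldenConj ^ s * (goldenConj ^ t) ^ 4 := by
    rw [← pow_mul, ← pow_add, Nat.mul_comm t 4]
  have e3 : goldenRatio ^ (2 * t) = (goldenRatio ^ t) ^ 2 := by
    rw [← pow_mul, Nat.mul_comm]
  have e4 : goldenConj ^ (2 * t) = (goldenConj ^ t) ^ 2 := by
    rw [← pow_mul, Nat.mul_comm]
  have e5 : goldenRatio ^ (s + 2 * t) = goldenRatio ^ s * (goldenRatio ^ t) ^ 2 := by
    rw [← pow_mul, ← pow_add, Nat.mul_comm t 2]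
  have e6 : goldenConj ^ (s + 2 * t) = goldenConj ^ s * (goldenConj ^ t) ^ 2 := by
    rw [← pow_mul, ← pow_add, Nat.mul_comm t 2]
  have huv : (goldenRatio ^ t * goldenConj ^ t) ^ 2 = 1 := by
    rw [← mul_pow, goldenRatio_mul_goldenConj, ← pow_mul, Nat.mul_comm t 2, pow_mul]
    norm_num
  rw [e1, e2, e3, e4, e5, e6]
  obtain ⟨A, hA⟩ : ∃ x, goldenRatio ^ s = x := ⟨_, rfl⟩
  obtain ⟨B, hB⟩ : ∃ x, goldenConj ^ s = x := ⟨_, rfl⟩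
  obtain ⟨u, hu⟩ : ∃ x, goldenRatio ^ t = x := ⟨_, rfl⟩
  obtain ⟨v, hv⟩ : ∃ x, goldenConj ^ t = x := ⟨_, rfl⟩
  obtain ⟨S, hS⟩ : ∃ x, Real.sqrt 5 = x := ⟨_, rfl⟩
  simp only [hA, hB, hu, hv, hS] at huv h5 h50 ⊢
  field_simp
  linear_combination (A * u ^ 4 + B * v ^ 4 - A - B) * h5 + 5 * (A + B) * huv

theorem key2_s3 (s t : ℕ) (hs : Odd s) :
    (lucas s : ℝ) * lucas (s + 4 * t) = lucas (2 * s + 4 * t) - lucas (4 * t) := by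
  rw [lucas_binet, lucas_binet, lucas_binet, lucas_binet]
  have e1 : goldenRatio ^ (s + 4 * t) = goldenRatio ^ s * (goldenRatio ^ t) ^ 4 := by
    rw [← pow_mul, ← pow_add, Nat.mul_comm t 4]
  have e2 : goldenConj ^ (s + 4 * t) = goldenConj ^ s * (goldenConj ^ t) ^ 4 := by
    rw [← pow_mul, ← pow_add, Nat.mul_comm t 4]
  have e3 : goldenRatio ^ (2 * s + 4 * t) = (goldenRatio ^ s) ^ 2 * (goldenRatio ^ t) ^ 4 := by
    rw [← pow_mul, ← pow_mul, ← pow_add]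
    congr 1; ring
  have e4 : goldenConj ^ (2 * s + 4 * t) = (goldenConj ^ s) ^ 2 * (goldenConj ^ t) ^ 4 := by
    rw [← pow_mul, ← pow_mul, ← pow_add]
    congr 1; ring
  have e5 : goldenRatio ^ (4 * t) = (goldenRatio ^ t) ^ 4 := by rw [← pow_mul, Nat.mul_comm]
  have e6 : goldenConj ^ (4 * t) = (goldenConj ^ t) ^ 4 := by rw [← pow_mul, Nat.mul_comm]
  have hAB : goldenRatio ^ s * goldenConj ^ s = -1 := by
    rw [← mul_pow, goldenRatio_mul_goldenConj, hs.neg_one_pow]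
  rw [e1, e2, e3, e4, e5, e6]
  obtain ⟨A, hA⟩ : ∃ x, goldenRatio ^ s = x := ⟨_, rfl⟩
  obtain ⟨B, hB⟩ : ∃ x, goldenConj ^ s = x := ⟨_, rfl⟩
  obtain ⟨u, hu⟩ : ∃ x, goldenRatio ^ t = x := ⟨_, rfl⟩
  obtain ⟨v, hv⟩ : ∃ x, goldenConj ^ t = x := ⟨_, rfl⟩
  simp only [hA, hB, hu, hv] at hAB ⊢
  linear_combination (u ^ 4 + v ^ 4) * hAB

lemma arg_eq (lam a b e f : ℝ) (ha : 0 < a) (hb : 0 < b) (hef : b = a + 5 * e * f) :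
    5 * lam * e * f / (a * b + lam ^ 2) = (lam / a + -(lam / b)) / (1 - lam / a * -(lam / b)) := by
  have hab : (0 : ℝ) < a * b + lam ^ 2 := by positivity
  rw [div_eq_div_iff hab.ne' (by
    have h : lam / a * -(lam / b) = -(lam ^ 2 / (a * b)) := by ring
    rw [h]
    have : 0 ≤ lam ^ 2 / (a * b) := div_nonneg (sq_nonneg _) (by positivity)
    intro hz
    nlinarith)]
  subst hef
  field_simp
  ring

theorem lucas_cast_pos (n : ℕ) : (0 : ℝ) < (lucas n : ℝ) := by
  exact_mod_cast lucas_pos n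

theorem step_arctan (lam : ℝ) (s t : ℕ) (hs : Odd s) :
    Real.arctan (5 * lam * (Nat.fib (2 * t) : ℝ) * (Nat.fib (s + 2 * t) : ℝ) /
        ((lucas (2 * s + 4 * t) : ℝ) - (lucas (4 * t) : ℝ) + lam ^ 2))
      = Real.arctan (lam / (lucas s : ℝ)) - Real.arctan (lam / (lucas (s + 4 * t) : ℝ)) := by
  have hL1 : (0 : ℝ) < (lucas s : ℝ) := lucas_cast_pos s
  have hL2 : (0 : ℝ) < (lucas (s + 4 * t) : ℝ) := lucas_cast_pos (s + 4 * t)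
  have hk2 := key2_s3 s t hs
  have hk1 := key1_s3 s t
  have hmul : (lam / (lucas s : ℝ)) * (-(lam / (lucas (s + 4 * t) : ℝ))) < 1 := by
    have : (lam / (lucas s : ℝ)) * (-(lam / (lucas (s + 4 * t) : ℝ)))
        = -(lam ^ 2 / ((lucas s : ℝ) * (lucas (s + 4 * t) : ℝ))) := by ring
    rw [this]
    have : 0 ≤ lam ^ 2 / ((lucas s : ℝ) * (lucas (s + 4 * t) : ℝ)) :=
      div_nonneg (sq_nonneg _) (by positivity)
    linarith
  have h := Real.arctan_add hmul
  rw [Real.arctan_neg] at h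
  have h' : Real.arctan (lam / (lucas s : ℝ)) - Real.arctan (lam / (lucas (s + 4 * t) : ℝ))
      = Real.arctan ((lam / (lucas s : ℝ) + -(lam / (lucas (s + 4 * t) : ℝ))) /
        (1 - lam / (lucas s : ℝ) * -(lam / (lucas (s + 4 * t) : ℝ)))) := by
    rw [sub_eq_add_neg]; exact h
  rw [h']
  congr 1
  have hD : (lucas (2 * s + 4 * t) : ℝ) - (lucas (4 * t) : ℝ) + lam ^ 2
      = (lucas s : ℝ) * (lucas (s + 4 * t) : ℝ) + lam ^ 2 := by
    rw [hk2]
  rw [hD]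
  exact arg_eq lam _ _ _ _ hL1 hL2 hk1

theorem theorem3_nonneg (lam : ℝ) (hlam : 0 ≤ lam) (j k p : ℕ) (hj : 1 ≤ j)
    (h : 2 * j + 1 ≤ 4 * j * p + 2 * k) :
    HasSum (fun r : ℕ =>
        Real.arctan (5 * lam * (Nat.fib (2 * j) : ℝ) *
            (Nat.fib (4 * j * (p + r) + 2 * k - 1) : ℝ) /
          ((lucas (8 * j * (p + r) + 4 * k - 2) : ℝ) - (lucas (4 * j) : ℝ) + lam ^ 2)))
      (Real.arctan (lam / (lucas (4 * j * p + 2 * k - 2 * j - 1) : ℝ))) := by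
  have hodd : ∀ r : ℕ, Odd (4 * j * p + 2 * k - 2 * j - 1 + 4 * j * r) := by
    intro r
    obtain ⟨m, hm⟩ : ∃ m, j * p = m := ⟨_, rfl⟩
    obtain ⟨n, hn⟩ : ∃ n, j * r = n := ⟨_, rfl⟩
    have h4 : 4 * j * p = 4 * m := by rw [← hm]; ring
    have h5 : 4 * j * r = 4 * n := by rw [← hn]; ring
    exact ⟨2 * m + k - j - 1 + 2 * n, by omega⟩
  have e1 : ∀ r : ℕ, 4 * j * (p + r) + 2 * k - 1
      = (4 * j * p + 2 * k - 2 * j - 1 + 4 * j * r) + 2 * j := by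
    intro r
    have hd : 4 * j * (p + r) = 4 * j * p + 4 * j * r := by ring
    omega
  have e2 : ∀ r : ℕ, 8 * j * (p + r) + 4 * k - 2
      = 2 * (4 * j * p + 2 * k - 2 * j - 1 + 4 * j * r) + 4 * j := by
    intro r
    have hd : 8 * j * (p + r) = 2 * (4 * j * p) + 2 * (4 * j * r) := by ring
    omega
  have e3 : ∀ r : ℕ, 4 * j * p + 2 * k - 2 * j - 1 + 4 * j * (r + 1)
      = (4 * j * p + 2 * k - 2 * j - 1 + 4 * j * r) + 4 * j := by
    intro r
    have hd : 4 * j * (r + 1) = 4 * j * r + 4 * j := by ring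
    omega
  set g : ℕ → ℝ :=
    fun n => Real.arctan (lam / (lucas (4 * j * p + 2 * k - 2 * j - 1 + 4 * j * n) : ℝ))
    with hgdef
  have hfg : ∀ r : ℕ,
      Real.arctan (5 * lam * (Nat.fib (2 * j) : ℝ) *
            (Nat.fib (4 * j * (p + r) + 2 * k - 1) : ℝ) /
          ((lucas (8 * j * (p + r) + 4 * k - 2) : ℝ) - (lucas (4 * j) : ℝ) + lam ^ 2))
        = g r - g (r + 1) := by
    intro r
    rw [e1 r, e2 r]
    rw [step_arctan lam (4 * j * p + 2 * k - 2 * j - 1 + 4 * j * r) j (hodd r)]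
    simp only [hgdef]
    rw [e3 r]
  have harct : ∀ x : ℝ, 0 ≤ x → 0 ≤ Real.arctan x := by
    intro x hx
    have := Real.arctan_strictMono.monotone hx
    rwa [Real.arctan_zero] at this
  have hnn : ∀ r : ℕ, 0 ≤
      Real.arctan (5 * lam * (Nat.fib (2 * j) : ℝ) *
            (Nat.fib (4 * j * (p + r) + 2 * k - 1) : ℝ) /
          ((lucas (8 * j * (p + r) + 4 * k - 2) : ℝ) - (lucas (4 * j) : ℝ) + lam ^ 2)) := by
    intro r
    apply harct
    apply div_nonneg
    · positivity
    · rw [e2 r]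
      have hk := key2_s3 (4 * j * p + 2 * k - 2 * j - 1 + 4 * j * r) j (hodd r)
      nlinarith [lucas_cast_pos (4 * j * p + 2 * k - 2 * j - 1 + 4 * j * r),
        lucas_cast_pos ((4 * j * p + 2 * k - 2 * j - 1 + 4 * j * r) + 4 * j), sq_nonneg lam]
  rw [hasSum_iff_tendsto_nat_of_nonneg hnn]
  have hsum : ∀ n : ℕ, (∑ i ∈ Finset.range n,
      Real.arctan (5 * lam * (Nat.fib (2 * j) : ℝ) *
            (Nat.fib (4 * j * (p + i) + 2 * k - 1) : ℝ) /
          ((lucas (8 * j * (p + i) + 4 * k - 2) : ℝ) - (lucas (4 * j) : ℝ) + lam ^ 2)))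
      = g 0 - g n := by
    intro n
    rw [Finset.sum_congr rfl fun i _ => hfg i]
    exact Finset.sum_range_sub' g n
  have hLten : Tendsto
      (fun n : ℕ => ((lucas (4 * j * p + 2 * k - 2 * j - 1 + 4 * j * n) : ℕ) : ℝ))
      atTop atTop := by
    apply tendsto_atTop_mono _ tendsto_natCast_atTop_atTop
    intro n
    have h1 : n ≤ 4 * j * p + 2 * k - 2 * j - 1 + 4 * j * n := by
      have h2 : n ≤ 4 * j * n := Nat.le_mul_of_pos_left n (by omega)
      omega
    exact_mod_cast le_trans h1 (self_le_lucas _)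
  have hdiv : Tendsto
      (fun n : ℕ => lam / ((lucas (4 * j * p + 2 * k - 2 * j - 1 + 4 * j * n) : ℕ) : ℝ))
      atTop (nhds 0) := Filter.Tendsto.div_atTop tendsto_const_nhds hLten
  have hgten : Tendsto g atTop (nhds 0) := by
    have hcomp := (Real.continuous_arctan.tendsto 0).comp hdiv
    simpa [hgdef, Function.comp_def, Real.arctan_zero] using hcomp
  have hfin : Tendsto (fun n : ℕ => g 0 - g n) atTop (nhds (g 0 - 0)) :=
    tendsto_const_nhds.sub hgten
  simp only [sub_zero] at hfin
  have hg0 : g 0 = Real.arctan (lam / (lucas (4 * j * p + 2 * k - 2 * j - 1) : ℝ)) := by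
    simp [hgdef]
  simp only [hsum]
  rw [← hg0]
  exact hfin

theorem theorem3 (lam : ℝ) (j k p : ℕ) (hj : 1 ≤ j)
    (h : 2 * j + 1 ≤ 4 * j * p + 2 * k) :
    HasSum (fun r : ℕ =>
        Real.arctan (5 * lam * (Nat.fib (2 * j) : ℝ) *
            (Nat.fib (4 * j * (p + r) + 2 * k - 1) : ℝ) /
          ((lucas (8 * j * (p + r) + 4 * k - 2) : ℝ) - (lucas (4 * j) : ℝ) + lam ^ 2)))
      (Real.arctan (lam / (lucas (4 * j * p + 2 * k - 2 * j - 1) : ℝ))) := by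
  rcases le_or_gt 0 lam with hlam | hlam
  · exact theorem3_nonneg lam hlam j k p hj h
  · have H := (theorem3_nonneg (-lam) (by linarith) j k p hj h).neg
    convert H using 1
    · rfl
    · funext r
      rw [← Real.arctan_neg]
      congr 1
      ring
    · rw [← Real.arctan_neg]
      congr 1
      ring
end

section
/- For every natural number j ≥ 1, the series ∑_{r=1}^∞ arctan( F_{2j}²·L_{4jr−2j} / F_{4jr−2j}² ) converges and its sum equals π/2. -/
open Real goldenRatio

lemma lucas_coe : ∀ n : ℕ, (lucas n : ℝ) = φ ^ n + ψ ^ n := by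
  intro n
  induction n using Nat.twoStepInduction with
  | zero => norm_num [lucas, goldenRatio_add_goldenConj]
  | one => norm_num [lucas, goldenRatio_add_goldenConj]
  | more n ih1 ih2 =>
    have h1 : φ ^ (n + 2) = φ ^ n * φ ^ 2 := by ring
    have h2 : ψ ^ (n + 2) = ψ ^ n * ψ ^ 2 := by ring
    show ((lucas (n+1) + lucas n : ℕ) : ℝ) = _
    push_cast
    rw [ih1, ih2, h1, h2, goldenRatio_sq, goldenConj_sq]
    ring

lemma gold_conj_pow_even {k : ℕ} (hk : Even k) : φ ^ k * ψ ^ k = 1 := by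
  rw [← mul_pow, goldenRatio_mul_goldenConj, hk.neg_one_pow]

/-- fib(p+2k) - fib p = fib k * lucas (p+k), for k even -/
lemma key1_s7 (p k : ℕ) (hk : Even k) :
    (Nat.fib (p + 2 * k) : ℝ) - Nat.fib p = Nat.fib k * lucas (p + k) := by
  have h := gold_conj_pow_even hk
  have h5 : (Real.sqrt 5) ≠ 0 := by positivity
  rw [Real.coe_fib_eq, Real.coe_fib_eq, Real.coe_fib_eq, lucas_coe]
  rw [show p + 2 * k = p + k + k by ring]
  simp only [pow_add]
  set s := Real.sqrt 5
  generalize (goldenRatio : ℝ) ^ k = a at h ⊢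
  generalize (goldenConj : ℝ) ^ k = b at h ⊢
  generalize (goldenRatio : ℝ) ^ p = A
  generalize (goldenConj : ℝ) ^ p = B
  rw [div_sub_div_same, div_mul_eq_mul_div, div_eq_div_iff h5 h5]
  linear_combination s * (A - B) * h

/-- fib p * fib (p + 2k) + fib k ^ 2 = fib (p+k)^2, for p even -/
lemma key2_s7 (p k : ℕ) (hp : Even p) :
    (Nat.fib p : ℝ) * Nat.fib (p + 2 * k) + Nat.fib k ^ 2 = Nat.fib (p + k) ^ 2 := by
  have h := gold_conj_pow_even hp
  have h5 : (Real.sqrt 5) ≠ 0 := by positivity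
  rw [Real.coe_fib_eq, Real.coe_fib_eq, Real.coe_fib_eq, Real.coe_fib_eq]
  rw [show p + 2 * k = p + k + k by ring]
  simp only [pow_add]
  set s := Real.sqrt 5
  generalize (goldenRatio : ℝ) ^ p = A at h ⊢
  generalize (goldenConj : ℝ) ^ p = B at h ⊢
  generalize (goldenRatio : ℝ) ^ k = a
  generalize (goldenConj : ℝ) ^ k = b
  have hnum : (A - B) * (A * a * a - B * b * b) + (a - b) ^ 2 = (A * a - B * b) ^ 2 := by
    linear_combination (-(a - b) ^ 2) * h
  rw [div_mul_div_comm, div_pow, div_pow, show s * s = s ^ 2 by ring, ← add_div, hnum]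

lemma arctan_sub_of_nonneg {x y : ℝ} (hy : 0 ≤ y) (hxy : y ≤ x) :
    Real.arctan x - Real.arctan y = Real.arctan ((x - y) / (1 + x * y)) := by
  have hx : 0 ≤ x := hy.trans hxy
  have hd : 0 < 1 + x * y := by positivity
  have h1y : ((1:ℝ) + y ^ 2) ≠ 0 := by positivity
  have hyt : y * ((x - y) / (1 + x * y)) < 1 := by
    rw [mul_div_assoc', div_lt_one hd]; nlinarith
  have key := Real.arctan_add hyt
  have hx' : (y + (x - y) / (1 + x * y)) / (1 - y * ((x - y) / (1 + x * y))) = x := by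
    rw [div_eq_iff (by nlinarith : 1 - y * ((x - y) / (1 + x * y)) ≠ 0)]
    field_simp
    ring
  rw [hx'] at key; linarith

theorem stmt7 (j : ℕ) (hj : 1 ≤ j) :
    HasSum (fun r : ℕ =>
        Real.arctan ((Nat.fib (2 * j) : ℝ) ^ 2 * (lucas (4 * j * (1 + r) - 2 * j) : ℝ) /
          (Nat.fib (4 * j * (1 + r) - 2 * j) : ℝ) ^ 2))
      (Real.pi / 2) := by
  set f : ℕ → ℝ := fun r =>
    Real.arctan ((Nat.fib (2 * j) : ℝ) ^ 2 * (lucas (4 * j * (1 + r) - 2 * j) : ℝ) /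
      (Nat.fib (4 * j * (1 + r) - 2 * j) : ℝ) ^ 2) with hf
  set G : ℕ → ℝ := fun n => Real.arctan ((Nat.fib (4 * j * n) : ℝ) / (Nat.fib (2 * j) : ℝ))
    with hG
  have hF0 : (0 : ℝ) < (Nat.fib (2 * j) : ℝ) := by
    exact_mod_cast Nat.fib_pos.2 (by omega)
  -- each term telescopes
  have hstep : ∀ r : ℕ, f r = G (r + 1) - G r := by
    intro r
    have hidx : 4 * j * (1 + r) - 2 * j = 4 * j * r + 2 * j := by
      rw [show 4 * j * (1 + r) = 2 * j + (4 * j * r + 2 * j) by ring, Nat.add_sub_cancel_left]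
    have hidx2 : 4 * j * (r + 1) = 4 * j * r + 2 * (2 * j) := by ring
    set p := 4 * j * r with hp
    set k := 2 * j with hk
    have hkeven : Even k := ⟨j, by rw [hk]; ring⟩
    have hpeven : Even p := ⟨2 * j * r, by rw [hp]; ring⟩
    have k1 := key1_s7 p k hkeven
    have k2 := key2_s7 p k hpeven
    have hm0 : (0 : ℝ) < (Nat.fib (p + k) : ℝ) := by
      exact_mod_cast Nat.fib_pos.2 (by
        have : 0 < k := by omega
        omega)
    set x : ℝ := (Nat.fib (p + 2 * k) : ℝ) / (Nat.fib k : ℝ) with hx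
    set y : ℝ := (Nat.fib p : ℝ) / (Nat.fib k : ℝ) with hy
    have hy0 : 0 ≤ y := by rw [hy]; positivity
    have hyx : y ≤ x := by
      rw [hx, hy]
      gcongr
      exact Nat.le_add_right _ _
    have harg : (x - y) / (1 + x * y) =
        (Nat.fib k : ℝ) ^ 2 * (lucas (p + k) : ℝ) / (Nat.fib (p + k) : ℝ) ^ 2 := by
      have hxy' : x - y = (lucas (p + k) : ℝ) := by
        rw [hx, hy, div_sub_div_same, k1, mul_div_cancel_left₀ _ hF0.ne']
      have hden : 1 + x * y = (Nat.fib (p + k) : ℝ) ^ 2 / (Nat.fib k : ℝ) ^ 2 := by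
        rw [hx, hy, div_mul_div_comm, ← k2]
        field_simp
        ring
      rw [hxy', hden, div_div_eq_mul_div]
      ring
    rw [hf, hG]
    simp only [hidx, hidx2]
    rw [← harg, ← arctan_sub_of_nonneg hy0 hyx]
  -- nonnegativity
  have hpos : ∀ r : ℕ, 0 ≤ f r := by
    intro r
    rw [← Real.arctan_zero]
    exact Real.arctan_strictMono.monotone (by positivity)
  rw [hasSum_iff_tendsto_nat_of_nonneg hpos]
  have hsum : ∀ n : ℕ, ∑ i ∈ Finset.range n, f i = G n := by
    intro n
    have := Finset.sum_range_sub G n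
    calc ∑ i ∈ Finset.range n, f i = ∑ i ∈ Finset.range n, (G (i + 1) - G i) := by
          exact Finset.sum_congr rfl fun i _ => hstep i
      _ = G n - G 0 := Finset.sum_range_sub G n
      _ = G n := by
          rw [hG]; simp [Real.arctan_zero]
  simp only [hsum]
  -- limit
  have hfib : Filter.Tendsto Nat.fib Filter.atTop Filter.atTop :=
    Nat.fib_mono.tendsto_atTop_atTop fun b =>
      ⟨b + 5, le_trans (Nat.le_add_right _ _) (Nat.le_fib_self (by omega))⟩
  have hlin : Filter.Tendsto (fun n : ℕ => 4 * j * n) Filter.atTop Filter.atTop := by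
    apply Filter.Tendsto.const_mul_atTop' (by omega : 0 < 4 * j)
    exact Filter.tendsto_id
  have h1 : Filter.Tendsto (fun n : ℕ => (Nat.fib (4 * j * n) : ℝ) / (Nat.fib (2 * j) : ℝ))
      Filter.atTop Filter.atTop := by
    apply Filter.Tendsto.atTop_div_const hF0
    exact tendsto_natCast_atTop_atTop.comp (hfib.comp hlin)
  exact (Real.tendsto_arctan_atTop.mono_right nhdsWithin_le_nhds).comp h1
end

section
/- For all natural numbers j ≥ 1 and k ≥ 1, the series ∑_{r=1}^∞ arctan( F_{4j−2} / F_{(4j−2)r+2k−1} ) converges and its sum equals arctan( F_{2j−1} / F_{2j+2k−2} ). -/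
open Real goldenRatio

private lemma fib_key (c d : ℕ) :
    (Nat.fib (2*c) : ℝ) * ((Nat.fib (2*(2*d+1)) : ℝ) * (Nat.fib (2*c + 2*(2*d+1)) : ℝ)
        + (Nat.fib (2*d+1) : ℝ) * (Nat.fib (2*c + (2*d+1)) : ℝ))
      = (Nat.fib (2*d+1) : ℝ) * ((Nat.fib (2*c + (2*d+1)) : ℝ) * (Nat.fib (2*c + 2*(2*d+1)) : ℝ)
        - (Nat.fib (2*(2*d+1)) : ℝ) * (Nat.fib (2*d+1) : ℝ)) := by
  have h5 : (Real.sqrt 5) ≠ 0 := by positivity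
  have hU : (φ : ℝ) ^ (2*c) ≠ 0 := pow_ne_zero _ goldenRatio_ne_zero
  have hs : (φ : ℝ) ^ (2*d+1) ≠ 0 := pow_ne_zero _ goldenRatio_ne_zero
  have h1 : (φ : ℝ) ^ (2*c) * ψ ^ (2*c) = 1 := by
    rw [← mul_pow, goldenRatio_mul_goldenConj, pow_mul]; norm_num
  have h2 : (φ : ℝ) ^ (2*d+1) * ψ ^ (2*d+1) = -1 := by
    rw [← mul_pow, goldenRatio_mul_goldenConj, pow_add, pow_mul]; norm_num
  have hV : (ψ : ℝ) ^ (2*c) = 1 / φ ^ (2*c) := by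
    rw [eq_div_iff hU]; linear_combination h1
  have ht : (ψ : ℝ) ^ (2*d+1) = -1 / φ ^ (2*d+1) := by
    rw [eq_div_iff hs]; linear_combination h2
  simp only [Real.coe_fib_eq,
    show 2*(2*d+1) = (2*d+1) + (2*d+1) by ring,
    show 2*c + ((2*d+1) + (2*d+1)) = 2*c + (2*d+1) + (2*d+1) by ring,
    pow_add, hV, ht]
  field_simp
  ring

private lemma arctan_step (m a : ℕ) (hm : m % 2 = 1) (ha : a % 2 = 0) (hma : m < a) :
    Real.arctan ((Nat.fib (2*m) : ℝ) / (Nat.fib (a + m) : ℝ))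
      = Real.arctan ((Nat.fib m : ℝ) / (Nat.fib a : ℝ))
        - Real.arctan ((Nat.fib m : ℝ) / (Nat.fib (a + 2*m) : ℝ)) := by
  obtain ⟨d, rfl⟩ : ∃ d, m = 2*d+1 := ⟨m / 2, by omega⟩
  obtain ⟨c, rfl⟩ : ∃ c, a = 2*c := ⟨a / 2, by omega⟩
  set m := 2*d+1
  set a := 2*c
  have hA : (0:ℝ) < Nat.fib a := by
    exact_mod_cast Nat.fib_pos.2 (by omega)
  have hB : (0:ℝ) < Nat.fib (a + m) := by
    exact_mod_cast Nat.fib_pos.2 (by omega)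
  have hC : (0:ℝ) < Nat.fib (a + 2*m) := by
    exact_mod_cast Nat.fib_pos.2 (by omega)
  set x : ℝ := (Nat.fib (2*m) : ℝ) / (Nat.fib (a + m) : ℝ) with hx
  set y : ℝ := (Nat.fib m : ℝ) / (Nat.fib (a + 2*m) : ℝ) with hy
  have hx1 : x ≤ 1 := by
    rw [hx, div_le_one hB]
    exact_mod_cast Nat.fib_mono (by omega)
  have hy1 : y < 1 := by
    rw [hy, div_lt_one hC]
    have h1 : 0 < Nat.fib (m+1) := Nat.fib_pos.2 (by omega)
    have h2 : Nat.fib (m+2) = Nat.fib m + Nat.fib (m+1) := Nat.fib_add_two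
    have h3 : Nat.fib (m+2) ≤ Nat.fib (a + 2*m) := Nat.fib_mono (by omega)
    exact_mod_cast by omega
  have hy0 : 0 ≤ y := by positivity
  have hx0 : 0 ≤ x := by positivity
  have hxy : x * y < 1 := by nlinarith
  have hadd := Real.arctan_add hxy
  have hne : (1 : ℝ) - x * y ≠ 0 := by nlinarith
  have hkey := fib_key c d
  have heq : (x + y) / (1 - x * y) = (Nat.fib m : ℝ) / (Nat.fib a : ℝ) := by
    rw [div_eq_div_iff hne (ne_of_gt hA)]
    rw [hx, hy]
    field_simp
    linear_combination hkey
  rw [heq] at hadd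
  linarith [hadd]

private lemma nat_le_fib (n : ℕ) : n + 1 ≤ Nat.fib (n + 2) := by
  rcases le_or_gt n 2 with h | h
  · interval_cases n <;> decide
  · have := Nat.le_fib_self (n := n + 2) (by omega)
    omega

theorem stmt13 (j k : ℕ) (hj : 1 ≤ j) (hk : 1 ≤ k) :
    HasSum (fun r : ℕ =>
        Real.arctan ((Nat.fib (4 * j - 2) : ℝ) /
          (Nat.fib ((4 * j - 2) * (1 + r) + 2 * k - 1) : ℝ)))
      (Real.arctan ((Nat.fib (2 * j - 1) : ℝ) / (Nat.fib (2 * j + 2 * k - 2) : ℝ))) := by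
  set m := 2 * j - 1 with hmdef
  have hm : m % 2 = 1 := by omega
  set idx : ℕ → ℕ := fun r => m * (2 * r + 1) + 2 * k - 1 with hidx
  set g : ℕ → ℝ := fun r => Real.arctan ((Nat.fib m : ℝ) / (Nat.fib (idx r) : ℝ)) with hg
  have hfun : (fun r : ℕ =>
        Real.arctan ((Nat.fib (4 * j - 2) : ℝ) /
          (Nat.fib ((4 * j - 2) * (1 + r) + 2 * k - 1) : ℝ)))
      = fun r : ℕ => g r - g (r + 1) := by
    funext r
    have e1 : 4 * j - 2 = 2 * m := by omega
    have b1 : m * (2 * r + 1) = 2 * (m * r) + m := by ring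
    have b2 : m * (2 * (r + 1) + 1) = 2 * (m * r) + 3 * m := by ring
    have b3 : 2 * m * (1 + r) = 2 * (m * r) + 2 * m := by ring
    have e2 : (4 * j - 2) * (1 + r) + 2 * k - 1 = idx r + m := by
      rw [e1]; simp only [hidx]; omega
    have e4 : idx (r + 1) = idx r + 2 * m := by simp only [hidx]; omega
    have ha : idx r % 2 = 0 := by simp only [hidx]; omega
    have hma : m < idx r := by simp only [hidx]; omega
    simp only [hg]
    rw [e2, e1, e4]
    exact arctan_step m (idx r) hm ha hma
  have htarget : Real.arctan ((Nat.fib (2 * j - 1) : ℝ) / (Nat.fib (2 * j + 2 * k - 2) : ℝ))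
      = g 0 := by
    have b1 : m * (2 * 0 + 1) = m := by ring
    have h0 : idx 0 = 2 * j + 2 * k - 2 := by simp only [hidx]; omega
    simp only [hg, h0, hmdef]
  rw [hfun, htarget]
  have hnonneg : ∀ i : ℕ, 0 ≤ g i - g (i + 1) := by
    intro i
    have hmono : g (i + 1) ≤ g i := by
      apply Real.arctan_strictMono.monotone
      have b1 : m * (2 * i + 1) = 2 * (m * i) + m := by ring
      have b2 : m * (2 * (i + 1) + 1) = 2 * (m * i) + 3 * m := by ring
      have h1 : (0:ℝ) < Nat.fib (idx i) := by
        exact_mod_cast Nat.fib_pos.2 (by simp only [hidx]; omega)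
      have h2 : (Nat.fib (idx i) : ℝ) ≤ Nat.fib (idx (i+1)) := by
        exact_mod_cast Nat.fib_mono (by simp only [hidx]; omega)
      apply div_le_div_of_nonneg_left (by positivity) h1 h2 |>.trans_eq rfl
    linarith
  rw [hasSum_iff_tendsto_nat_of_nonneg hnonneg]
  have hsum : ∀ n : ℕ, ∑ i ∈ Finset.range n, (g i - g (i + 1)) = g 0 - g n := by
    intro n; exact Finset.sum_range_sub' g n
  simp only [hsum]
  have hg0 : Filter.Tendsto g Filter.atTop (nhds 0) := by
    have hxlim : Filter.Tendsto (fun n : ℕ => (Nat.fib m : ℝ) / (Nat.fib (idx n) : ℝ))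
        Filter.atTop (nhds 0) := by
      apply squeeze_zero (fun n => by positivity)
        (g := fun n : ℕ => (Nat.fib m : ℝ) / ((n : ℝ) + 1))
      · intro n
        have b1 : m * (2 * n + 1) = 2 * (m * n) + m := by ring
        have b0 : n ≤ m * n := Nat.le_mul_of_pos_left n (by omega)
        have hidxge : n + 2 ≤ idx n := by simp only [hidx]; omega
        have h1 : (n + 1 : ℕ) ≤ Nat.fib (idx n) :=
          le_trans (nat_le_fib n) (Nat.fib_mono hidxge)
        have h1' : ((n : ℝ) + 1) ≤ (Nat.fib (idx n) : ℝ) := by exact_mod_cast h1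
        have h2 : (0:ℝ) < (n : ℝ) + 1 := by positivity
        exact div_le_div_of_nonneg_left (by positivity) h2 h1'
      · have := (tendsto_const_div_atTop_nhds_zero_nat (Nat.fib m : ℝ)).comp
          (Filter.tendsto_add_atTop_nat 1)
        convert this using 2 with n
        simp only [Function.comp]
        push_cast
        ring
    have := (Real.continuous_arctan.tendsto 0).comp hxlim
    simpa [Real.arctan_zero, hg, Function.comp_def] using this
  have : Filter.Tendsto (fun n : ℕ => g 0 - g n) Filter.atTop (nhds (g 0 - 0)) :=
    Filter.Tendsto.const_sub _ hg0
  simpa using this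
end

section
/- For every natural number k ≥ 1, the series ∑_{r=1}^∞ arctan( 1 / F_{2r+2k−1} ) converges and its sum equals arctan( 1 / F_{2k} ). (The case k = 1 is Lehmer's classical formula ∑_{r=1}^∞ arctan(1/F_{2r+1}) = arctan(1/F_2) = π/4.) -/
open Real Filter Finset

lemma fibid (n : ℕ) : (Nat.fib (2*n+1) : ℤ) * Nat.fib (2*n+2) =
    Nat.fib (2*n) * Nat.fib (2*n+3) + 1 := by
  induction n with
  | zero => decide
  | succ n ih =>
    have e2 : Nat.fib (2*n+2) = Nat.fib (2*n) + Nat.fib (2*n+1) := Nat.fib_add_two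
    have e3 : Nat.fib (2*n+3) = Nat.fib (2*n+1) + Nat.fib (2*n+2) := Nat.fib_add_two
    have e4 : Nat.fib (2*n+4) = Nat.fib (2*n+2) + Nat.fib (2*n+3) := Nat.fib_add_two
    have e5 : Nat.fib (2*n+5) = Nat.fib (2*n+3) + Nat.fib (2*n+4) := Nat.fib_add_two
    have h1 : 2*(n+1)+1 = 2*n+3 := by ring
    have h2 : 2*(n+1)+2 = 2*n+4 := by ring
    have h3 : 2*(n+1)+3 = 2*n+5 := by ring
    have h4 : 2*(n+1) = 2*n+2 := by ring
    rw [h1, h2, h3, h4, e5, e4, e3, e2]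
    rw [e3, e2] at ih
    push_cast at ih ⊢
    linear_combination ih

lemma keylem (n : ℕ) (hn : 1 ≤ n) :
    arctan (1 / (Nat.fib (2*n+1) : ℝ)) =
      arctan (1 / (Nat.fib (2*n) : ℝ)) - arctan (1 / (Nat.fib (2*n+2) : ℝ)) := by
  have ha : (2:ℝ) ≤ Nat.fib (2*n+1) := by
    have : Nat.fib 3 ≤ Nat.fib (2*n+1) := Nat.fib_mono (by omega)
    exact_mod_cast this
  have hb : (3:ℝ) ≤ Nat.fib (2*n+2) := by
    have : Nat.fib 4 ≤ Nat.fib (2*n+2) := Nat.fib_mono (by omega)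
    exact_mod_cast this
  have hc : (1:ℝ) ≤ Nat.fib (2*n) := by
    have : Nat.fib 2 ≤ Nat.fib (2*n) := Nat.fib_mono (by omega)
    exact_mod_cast this
  have hid : (Nat.fib (2*n+1) : ℝ) * Nat.fib (2*n+2) =
      Nat.fib (2*n) * Nat.fib (2*n+3) + 1 := by exact_mod_cast fibid n
  have hd : (1:ℝ) ≤ Nat.fib (2*n+3) := by
    have : Nat.fib 2 ≤ Nat.fib (2*n+3) := Nat.fib_mono (by omega)
    exact_mod_cast this
  have hmul : (1 / (Nat.fib (2*n+1) : ℝ)) * (1 / (Nat.fib (2*n+2) : ℝ)) < 1 := by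
    rw [div_mul_div_comm, one_mul, div_lt_one (by nlinarith)]
    nlinarith
  rw [eq_sub_iff_add_eq, arctan_add hmul]
  congr 1
  have h3 : (Nat.fib (2*n+3) : ℝ) = Nat.fib (2*n+1) + Nat.fib (2*n+2) := by
    exact_mod_cast (Nat.fib_add_two : Nat.fib (2*n+3) = _)
  rw [div_eq_div_iff (by linarith) (by linarith)]
  field_simp
  nlinarith [hid, h3]

theorem stmt14 (k : ℕ) (hk : 1 ≤ k) :
    HasSum (fun r : ℕ =>
        Real.arctan (1 / (Nat.fib (2 * (1 + r) + 2 * k - 1) : ℝ)))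
      (Real.arctan (1 / (Nat.fib (2 * k) : ℝ))) := by
  set g : ℕ → ℝ := fun r => arctan (1 / (Nat.fib (2*(r+k)) : ℝ)) with hg
  have hnonneg : ∀ r : ℕ, 0 ≤ arctan (1 / (Nat.fib (2 * (1 + r) + 2 * k - 1) : ℝ)) := by
    intro r
    rw [← Real.arctan_zero]
    exact Real.arctan_strictMono.monotone (by positivity)
  rw [hasSum_iff_tendsto_nat_of_nonneg hnonneg]
  have hterm : ∀ r : ℕ, arctan (1 / (Nat.fib (2 * (1 + r) + 2 * k - 1) : ℝ)) = g r - g (r+1) := by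
    intro r
    have h1 : 2 * (1 + r) + 2 * k - 1 = 2*(r+k)+1 := by omega
    have h2 : 2*(r+1+k) = 2*(r+k)+2 := by ring
    rw [h1, hg]
    simp only [h2]
    exact keylem (r+k) (by omega)
  have hsum : ∀ n : ℕ, ∑ i ∈ range n, arctan (1 / (Nat.fib (2 * (1 + i) + 2 * k - 1) : ℝ))
      = g 0 - g n := by
    intro n
    rw [Finset.sum_congr rfl fun i _ => hterm i]
    exact Finset.sum_range_sub' g n
  simp only [hsum]
  have hg0 : g 0 = arctan (1 / (Nat.fib (2*k) : ℝ)) := by simp [hg]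
  rw [hg0]
  have htend : Tendsto g atTop (nhds 0) := by
    rw [hg]
    have hnat : Tendsto (fun r : ℕ => Nat.fib (2*(r+k))) atTop atTop := by
      apply tendsto_atTop_mono' atTop (show ∀ᶠ r : ℕ in atTop, r ≤ Nat.fib (2*(r+k)) from ?_) tendsto_id
      filter_upwards [Filter.eventually_ge_atTop 5] with r hr
      calc r ≤ 2*(r+k) := by omega
        _ ≤ Nat.fib (2*(r+k)) := Nat.le_fib_self (by omega)
    have h1 : Tendsto (fun r : ℕ => ((Nat.fib (2*(r+k)) : ℝ))) atTop atTop :=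
      tendsto_natCast_atTop_atTop.comp hnat
    have h2 : Tendsto (fun r : ℕ => 1 / ((Nat.fib (2*(r+k)) : ℝ))) atTop (nhds 0) :=
      tendsto_const_nhds.div_atTop h1
    simpa using (Real.continuous_arctan.tendsto 0).comp h2 |>.congr (fun r => by simp)
  have := Filter.Tendsto.const_sub (arctan (1 / (Nat.fib (2*k) : ℝ))) htend
  simpa using this
end
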